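/- Let H be a complex Hilbert space and let ∘ : E(H) × E(H) → E(H) satisfy the duality condition (A∘ρ is trace-class and Tr((A∘ρ)B) = Tr(ρ(A∘B)) for all ρ ∈ D(H) and A,B ∈ E(H)) and the unit condition (A∘I = I∘A = A for all A ∈ E(H)). Suppose A ∈ E(H), B is a positive bounded operator on H, and ψ ∈ H is a unit vector with rank-one projection P_ψ, such that A∘ρ = Tr(ρB)·P_ψ for every ρ ∈ D(H). Then B = A, there exists λ ∈ [0,1] with A = λP_ψ, and A∘ρ = A^{1/2}ρA^{1/2} for every ρ ∈ D(H). -/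

import Mathlib

/-!
Common setup: effects, density operators, trace, square roots and the strong
operator topology on a complex Hilbert space `H`, together with the five
conditions (duality, unit, weak associativity, continuity, purity) defining a
sequential product on the set `E(H)` of quantum effects.
-/

set_option maxHeartbeats 1000000
set_option synthInstance.maxHeartbeats 1000000

open scoped InnerProductSpace ComplexOrder
open Filter

noncomputable section

variable (H : Type*) [NormedAddCommGroup H] [InnerProductSpace ℂ H] [CompleteSpace H]

/-- The index set of a fixed Hilbert basis of `H`. -/
def stdIdx : Set H := (exists_hilbertBasis ℂ H).choose

/-- A fixed Hilbert basis of `H`. -/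
def stdBasis : HilbertBasis (stdIdx H) ℂ H := (exists_hilbertBasis ℂ H).choose_spec.choose

variable {H}

/-- The positive square root `A^{1/2}` of a (positive) operator `A`. -/
def sqrtOp (A : H →L[ℂ] H) : H →L[ℂ] H := CFC.sqrt A

/-- The trace of an operator, computed in the fixed Hilbert basis. -/
def traceOp (T : H →L[ℂ] H) : ℂ := ∑' i, ⟪(stdBasis H i : H), T (stdBasis H i)⟫_ℂ

/-- `T` is trace-class: `|T| = (T*T)^{1/2}` has finite trace. -/
def IsTraceClass (T : H →L[ℂ] H) : Prop :=
  Summable fun i => ⟪(stdBasis H i : H), sqrtOp (star T * T) (stdBasis H i)⟫_ℂ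

/-- A quantum effect: an operator `A` with `0 ≤ A ≤ 1` in the Loewner order (in
particular `A` is bounded and self-adjoint).  `E(H)` is the set of effects. -/
def IsEffect (A : H →L[ℂ] H) : Prop := 0 ≤ A ∧ A ≤ 1

/-- A density operator: a positive trace-class operator of unit trace.
`D(H)` is the set of density operators. -/
def IsDensity (ρ : H →L[ℂ] H) : Prop := 0 ≤ ρ ∧ IsTraceClass ρ ∧ traceOp ρ = 1

variable (H) in
/-- The strong operator topology on bounded operators: the topology of pointwise
convergence (as maps into `H` with its norm topology). -/
def sot : TopologicalSpace (H →L[ℂ] H) :=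
  TopologicalSpace.induced (fun T => (T : H → H)) inferInstance

/-- `p` is a rank-one orthogonal projection. -/
def IsRankOneProjection (p : H →L[ℂ] H) : Prop :=
  IsIdempotentElem p ∧ IsSelfAdjoint p ∧ LinearMap.rank (p : H →ₗ[ℂ] H) = 1

/-- `P_ψ`: the rank-one orthogonal projection onto the span of a unit vector `ψ`,
`x ↦ ⟪ψ, x⟫ • ψ`. -/
def projVec (ψ : H) : H →L[ℂ] H := (innerSL ℂ ψ).smulRight ψ

/-- `op` is a binary operation on `E(H)`: it maps pairs of effects to effects. -/
def EffectClosed (op : (H →L[ℂ] H) → (H →L[ℂ] H) → (H →L[ℂ] H)) : Prop :=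
  ∀ A B, IsEffect A → IsEffect B → IsEffect (op A B)

/-- Condition 1 (Duality): for all effects `A, B` and densities `ρ`, the operator
`A ∘ ρ` is trace-class and `Tr((A∘ρ)B) = Tr(ρ(A∘B))`. -/
def DualityCond (op : (H →L[ℂ] H) → (H →L[ℂ] H) → (H →L[ℂ] H)) : Prop :=
  ∀ A B ρ : H →L[ℂ] H, IsEffect A → IsEffect B → IsDensity ρ →
    IsTraceClass (op A ρ) ∧ traceOp (op A ρ * B) = traceOp (ρ * op A B)

/-- Condition 2 (Unit): `A ∘ I = I ∘ A = A` for every effect `A`. -/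
def UnitCond (op : (H →L[ℂ] H) → (H →L[ℂ] H) → (H →L[ℂ] H)) : Prop :=
  ∀ A : H →L[ℂ] H, IsEffect A → op A 1 = A ∧ op 1 A = A

/-- Condition 3 (Weak associativity): `A² ∘ B = A ∘ (A ∘ B)` for all effects `A, B`. -/
def WeakAssocCond (op : (H →L[ℂ] H) → (H →L[ℂ] H) → (H →L[ℂ] H)) : Prop :=
  ∀ A B : H →L[ℂ] H, IsEffect A → IsEffect B → op (A * A) B = op A (op A B)

/-- Condition 4 (Continuity): for each fixed effect `B`, the map `A ↦ A ∘ B` is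
continuous on `E(H)` for the strong operator topology. -/
def ContinuityCond (op : (H →L[ℂ] H) → (H →L[ℂ] H) → (H →L[ℂ] H)) : Prop :=
  ∀ B : H →L[ℂ] H, IsEffect B →
    @ContinuousOn _ _ (sot H) (sot H) (fun A => op A B) {A | IsEffect A}

/-- Condition 5 (Purity): for every effect `A` and every rank-one orthogonal
projection `p`, the operator `A ∘ p` has rank at most `1`. -/
def PurityCond (op : (H →L[ℂ] H) → (H →L[ℂ] H) → (H →L[ℂ] H)) : Prop :=
  ∀ A p : H →L[ℂ] H, IsEffect A → IsRankOneProjection p →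
    LinearMap.rank ((op A p) : H →ₗ[ℂ] H) ≤ 1

-- ## auxiliary lemmas

lemma projVec_apply (φ x : H) : projVec φ x = ⟪φ, x⟫_ℂ • φ := rfl

lemma projVec_isSelfAdjoint (φ : H) : IsSelfAdjoint (projVec φ) := by
  rw [ContinuousLinearMap.isSelfAdjoint_iff_isSymmetric]
  intro x y
  simp only [ContinuousLinearMap.coe_coe, projVec_apply, inner_smul_left, inner_smul_right,
    inner_conj_symm]
  ring

lemma projVec_nonneg (φ : H) : (0 : H →L[ℂ] H) ≤ projVec φ := by
  rw [ContinuousLinearMap.nonneg_iff_isPositive]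
  refine ⟨ContinuousLinearMap.isSelfAdjoint_iff_isSymmetric.mp (projVec_isSelfAdjoint φ), fun x => ?_⟩
  rw [ContinuousLinearMap.reApplyInnerSelf]
  simp only [projVec_apply, inner_smul_left]
  rw [mul_comm ((starRingEnd ℂ) ⟪φ, x⟫_ℂ) ⟪φ, x⟫_ℂ, Complex.mul_conj]
  exact Complex.normSq_nonneg _

lemma projVec_mul_self {φ : H} (hφ : ‖φ‖ = 1) : projVec φ * projVec φ = projVec φ := by
  ext x
  simp [ContinuousLinearMap.mul_apply, projVec_apply, inner_smul_right,
    inner_self_eq_norm_sq_to_K, hφ]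

lemma sqrtOp_projVec {φ : H} (hφ : ‖φ‖ = 1) : sqrtOp (projVec φ) = projVec φ :=
  CFC.sqrt_unique (projVec_mul_self hφ) (projVec_nonneg φ)

lemma traceOp_smul (c : ℂ) (T : H →L[ℂ] H) : traceOp (c • T) = c * traceOp T := by
  unfold traceOp
  rw [← tsum_mul_left]
  exact tsum_congr fun i => by simp [inner_smul_right]

lemma traceOp_projVec (φ : H) : traceOp (projVec φ) = ⟪φ, φ⟫_ℂ := by
  unfold traceOp
  rw [← (stdBasis H).tsum_inner_mul_inner φ φ]
  exact tsum_congr fun i => by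
    simp [projVec_apply, inner_smul_right]

lemma traceOp_mul_projVec (X : H →L[ℂ] H) (φ : H) : traceOp (X * projVec φ) = ⟪φ, X φ⟫_ℂ := by
  unfold traceOp
  rw [← (stdBasis H).tsum_inner_mul_inner φ (X φ)]
  exact tsum_congr fun i => by
    simp [ContinuousLinearMap.mul_apply, projVec_apply, inner_smul_right]

lemma traceOp_projVec_mul (φ : H) (X : H →L[ℂ] H) : traceOp (projVec φ * X) = ⟪φ, X φ⟫_ℂ := by
  unfold traceOp
  have h1 : ∀ i : stdIdx H, ⟪(stdBasis H i : H), (projVec φ * X) (stdBasis H i)⟫_ℂ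
      = ⟪ContinuousLinearMap.adjoint X φ, (stdBasis H i : H)⟫_ℂ * ⟪(stdBasis H i : H), φ⟫_ℂ := by
    intro i
    simp [ContinuousLinearMap.mul_apply, projVec_apply, inner_smul_right,
      ContinuousLinearMap.adjoint_inner_left]
  rw [tsum_congr h1, (stdBasis H).tsum_inner_mul_inner, ContinuousLinearMap.adjoint_inner_left]

lemma isDensity_projVec {φ : H} (hφ : ‖φ‖ = 1) : IsDensity (projVec φ) := by
  refine ⟨projVec_nonneg φ, ?_, by rw [traceOp_projVec, inner_self_eq_norm_sq_to_K, hφ]; norm_num⟩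
  unfold IsTraceClass
  rw [projVec_isSelfAdjoint φ |>.star_eq, projVec_mul_self hφ]
  rw [show sqrtOp (projVec φ) = projVec φ from sqrtOp_projVec hφ]
  have := (stdBasis H).summable_inner_mul_inner φ φ
  refine this.congr fun i => ?_
  simp [projVec_apply, inner_smul_right]

lemma smul_nonneg_op {l : ℝ} (hl : 0 ≤ l) {T : H →L[ℂ] H} (hT : 0 ≤ T) :
    (0 : H →L[ℂ] H) ≤ (l : ℂ) • T := by
  rw [ContinuousLinearMap.nonneg_iff_isPositive] at hT ⊢
  refine ⟨?_, fun x => ?_⟩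
  · rw [← ContinuousLinearMap.isSelfAdjoint_iff_isSymmetric, IsSelfAdjoint, star_smul,
      (ContinuousLinearMap.isSelfAdjoint_iff_isSymmetric.mpr hT.1).star_eq, Complex.star_def, Complex.conj_ofReal]
  · rw [ContinuousLinearMap.reApplyInnerSelf]
    simp only [ContinuousLinearMap.smul_apply, inner_smul_left, Complex.star_def,
      Complex.conj_ofReal]
    rw [RCLike.re_to_complex, Complex.re_ofReal_mul]
    exact mul_nonneg hl (hT.2 x)

lemma pos_apply_eq_zero {A : H →L[ℂ] H} (hA : 0 ≤ A) {φ : H} (h : ⟪φ, A φ⟫_ℂ = 0) :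
    A φ = 0 := by
  have hs : 0 ≤ sqrtOp A := CFC.sqrt_nonneg A
  have hmul : sqrtOp A * sqrtOp A = A := CFC.sqrt_mul_sqrt_self A hA
  have hsym := id
    (((ContinuousLinearMap.nonneg_iff_isPositive _).mp hs).1)
  have h2 : ⟪sqrtOp A φ, sqrtOp A φ⟫_ℂ = 0 := by
    have e1 := hsym φ (sqrtOp A φ)
    simp only [ContinuousLinearMap.coe_coe] at e1
    rw [e1, ← ContinuousLinearMap.mul_apply, hmul]
    exact h
  have h3 : sqrtOp A φ = 0 := inner_self_eq_zero.mp h2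
  rw [← hmul, ContinuousLinearMap.mul_apply, h3, map_zero]

lemma eq_of_unit_inner_eq {S T : H →L[ℂ] H}
    (h : ∀ φ : H, ‖φ‖ = 1 → ⟪φ, S φ⟫_ℂ = ⟪φ, T φ⟫_ℂ) : S = T := by
  have hall : ∀ x : H, ⟪x, S x⟫_ℂ = ⟪x, T x⟫_ℂ := by
    intro x
    rcases eq_or_ne x 0 with rfl | hx
    · simp
    · set c : ℂ := ((‖x‖ : ℂ))⁻¹ with hc
      have hc0 : c ≠ 0 := by
        simp [hc, norm_eq_zero, hx]
      have hφ : ‖c • x‖ = 1 := by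
        rw [norm_smul, hc]
        simp [norm_ne_zero_iff.mpr hx]
      have h1 := h _ hφ
      rw [map_smul, map_smul, inner_smul_left, inner_smul_right, inner_smul_left,
        inner_smul_right, ← mul_assoc, ← mul_assoc] at h1
      have hcc : (starRingEnd ℂ) c * c ≠ 0 :=
        mul_ne_zero (by simpa using hc0) hc0
      exact mul_left_cancel₀ hcc h1
  have hzero : ∀ x : H, ⟪(S - T) x, x⟫_ℂ = 0 := by
    intro x
    rw [ContinuousLinearMap.sub_apply, inner_sub_left, sub_eq_zero]
    calc ⟪S x, x⟫_ℂ = (starRingEnd ℂ) ⟪x, S x⟫_ℂ := (inner_conj_symm _ _).symm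
      _ = (starRingEnd ℂ) ⟪x, T x⟫_ℂ := by rw [hall]
      _ = ⟪T x, x⟫_ℂ := inner_conj_symm _ _
  have hlin := (inner_map_self_eq_zero ((S - T : H →L[ℂ] H) : H →ₗ[ℂ] H)).mp fun x => hzero x
  have hST : (S - T : H →L[ℂ] H) = 0 := by
    ext x
    exact congrFun (congrArg (DFunLike.coe) hlin) x
  exact sub_eq_zero.mp hST


lemma effect_one : IsEffect (1 : H →L[ℂ] H) := by
  constructor
  · rw [ContinuousLinearMap.nonneg_iff_isPositive]
    refine ⟨ContinuousLinearMap.isSelfAdjoint_iff_isSymmetric.mp (IsSelfAdjoint.one _), fun x => ?_⟩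
    rw [ContinuousLinearMap.reApplyInnerSelf]
    simp [inner_self_eq_norm_sq]
    rw [← Complex.ofReal_pow, Complex.ofReal_re]; positivity
  · exact le_refl _

lemma projVec_le_one {φ : H} (hφ : ‖φ‖ = 1) : projVec φ ≤ 1 := by
  rw [ContinuousLinearMap.le_def]
  refine ⟨ContinuousLinearMap.isSelfAdjoint_iff_isSymmetric.mp ((IsSelfAdjoint.one (H →L[ℂ] H)).sub (projVec_isSelfAdjoint φ)), fun x => ?_⟩
  rw [ContinuousLinearMap.reApplyInnerSelf]
  simp only [ContinuousLinearMap.sub_apply, ContinuousLinearMap.one_apply, inner_sub_left,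
    projVec_apply, inner_smul_left, map_sub]
  rw [mul_comm ((starRingEnd ℂ) ⟪φ, x⟫_ℂ) ⟪φ, x⟫_ℂ, Complex.mul_conj]
  rw [inner_self_eq_norm_sq, RCLike.re_to_complex, Complex.ofReal_re]
  rw [Complex.normSq_eq_norm_sq]
  have h1 : ‖⟪φ, x⟫_ℂ‖ ≤ ‖x‖ := by
    simpa [hφ] using norm_inner_le_norm (𝕜 := ℂ) φ x
  have h2 : ‖⟪φ, x⟫_ℂ‖ ^ 2 ≤ ‖x‖ ^ 2 := by
    exact pow_le_pow_left₀ (norm_nonneg _) h1 2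
  linarith

lemma projVec_mul_mul (ψ : H) (X : H →L[ℂ] H) :
    projVec ψ * X * projVec ψ = ⟪ψ, X ψ⟫_ℂ • projVec ψ := by
  ext x
  simp only [ContinuousLinearMap.mul_apply, ContinuousLinearMap.smul_apply, projVec_apply,
    map_smul, inner_smul_right, smul_smul]
  rw [mul_comm]

/-- Case (iii) of the characterization theorem: if `∘ : E(H) × E(H) → E(H)` satisfies the
duality and unit conditions, `A` is an effect, `B` is a positive bounded operator, `ψ` is a
unit vector, and `A ∘ ρ = Tr(ρB)·P_ψ` for every density operator `ρ`, then `B = A`,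
`A = λP_ψ` for some `λ ∈ [0,1]`, and `A ∘ ρ = A^{1/2} ρ A^{1/2}` for every density `ρ`. -/
theorem rank_one_case
    (op : (H →L[ℂ] H) → (H →L[ℂ] H) → (H →L[ℂ] H)) (hmap : EffectClosed op)
    (hdual : DualityCond op) (hunit : UnitCond op)
    (A : H →L[ℂ] H) (hA : IsEffect A)
    (B : H →L[ℂ] H) (hB : 0 ≤ B)
    (ψ : H) (hψ : ‖ψ‖ = 1)
    (h : ∀ ρ : H →L[ℂ] H, IsDensity ρ → op A ρ = traceOp (ρ * B) • projVec ψ) :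
    B = A ∧
    (∃ l : ℝ, l ∈ Set.Icc (0 : ℝ) 1 ∧ A = (l : ℂ) • projVec ψ) ∧
    ∀ ρ : H →L[ℂ] H, IsDensity ρ → op A ρ = sqrtOp A * ρ * sqrtOp A := by
  have hone : IsEffect (1 : H →L[ℂ] H) := effect_one
  have hψ0 : ψ ≠ 0 := by
    intro h0; rw [h0, norm_zero] at hψ; norm_num at hψ
  -- Step 1 : B = A
  have hBA : B = A := by
    apply eq_of_unit_inner_eq
    intro φ hφ
    have hdens := isDensity_projVec hφ
    have hd := (hdual A 1 (projVec φ) hA hone hdens).2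
    rw [mul_one, (hunit A hA).1, h _ hdens, traceOp_smul, traceOp_projVec,
      traceOp_projVec_mul, traceOp_projVec_mul, inner_self_eq_norm_sq_to_K, hψ] at hd
    simpa using hd
  rw [hBA] at h
  -- Step 2 : op A C = ⟪ψ, C ψ⟫ • A for every effect C
  have hopC : ∀ C : H →L[ℂ] H, IsEffect C → op A C = ⟪ψ, C ψ⟫_ℂ • A := by
    intro C hC
    apply eq_of_unit_inner_eq
    intro φ hφ
    have hdens := isDensity_projVec hφ
    have hd := (hdual A C (projVec φ) hA hC hdens).2
    rw [h _ hdens, smul_mul_assoc, traceOp_smul, traceOp_projVec_mul, traceOp_projVec_mul,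
      traceOp_projVec_mul] at hd
    rw [← hd]
    simp only [ContinuousLinearMap.smul_apply, inner_smul_right]
    ring
  -- Step 3 : A vanishes on the orthogonal complement of ψ
  have hAperp : ∀ w : H, ⟪ψ, w⟫_ℂ = 0 → A w = 0 := by
    intro w hw
    rcases eq_or_ne w 0 with rfl | hw0
    · simp
    · have hnw : ((‖w‖ : ℂ)) ≠ 0 := by
        simpa using norm_ne_zero_iff.mpr hw0
      set φ : H := ((‖w‖ : ℂ))⁻¹ • w with hφdef
      have hφn : ‖φ‖ = 1 := by
        rw [hφdef, norm_smul]
        simp [norm_ne_zero_iff.mpr hw0]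
      have hφperp : ⟪ψ, φ⟫_ℂ = 0 := by
        rw [hφdef, inner_smul_right, hw, mul_zero]
      have h2 := h (projVec φ) (isDensity_projVec hφn)
      rw [hopC (projVec φ) ⟨projVec_nonneg φ, projVec_le_one hφn⟩] at h2
      rw [projVec_apply, inner_smul_right, hφperp, mul_zero, zero_smul,
        traceOp_projVec_mul] at h2
      have h3 : ⟪φ, A φ⟫_ℂ = 0 := by
        have happ := congrArg (fun f : H →L[ℂ] H => f ψ) h2.symm
        simp only [ContinuousLinearMap.smul_apply, projVec_apply, ContinuousLinearMap.zero_apply,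
          inner_self_eq_norm_sq_to_K, hψ] at happ
        norm_num at happ
        rcases happ with h' | h'
        · exact h'
        · exact absurd h' hψ0
      have h4 : A φ = 0 := pos_apply_eq_zero hA.1 h3
      have h5 : (‖w‖ : ℂ) • A φ = A w := by
        rw [hφdef, map_smul, smul_smul, mul_inv_cancel₀ hnw, one_smul]
      rw [← h5, h4, smul_zero]
  -- Step 4 : A = l • projVec ψ
  have hApos : A.IsPositive := (ContinuousLinearMap.nonneg_iff_isPositive _).mp hA.1
  have hsym := hApos.1
  have hrange : ∀ y : H, A y = ⟪ψ, A y⟫_ℂ • ψ := by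
    intro y
    obtain ⟨w, hwdef⟩ : ∃ w : H, w = A y - ⟪ψ, A y⟫_ℂ • ψ := ⟨_, rfl⟩
    have hw : ⟪ψ, w⟫_ℂ = 0 := by
      rw [hwdef, inner_sub_right, inner_smul_right, inner_self_eq_norm_sq_to_K, hψ]
      norm_num
    have hwψ : ⟪w, ψ⟫_ℂ = 0 := by
      rw [← inner_conj_symm, hw, map_zero]
    have hAw : A w = 0 := hAperp w hw
    have h6 : ⟪w, A y⟫_ℂ = 0 := by
      have e := hsym w y
      simp only [ContinuousLinearMap.coe_coe] at e
      rw [← e, hAw, inner_zero_left]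
    have h7 : ⟪w, w⟫_ℂ = 0 := by
      nth_rewrite 2 [hwdef]
      rw [inner_sub_right, inner_smul_right, h6, hwψ, mul_zero, sub_zero]
    have h8 : w = 0 := inner_self_eq_zero.mp h7
    rw [h8] at hwdef
    exact (sub_eq_zero.mp hwdef.symm)
  set l : ℝ := RCLike.re ⟪A ψ, ψ⟫_ℂ with hl
  have h9 : ⟪A ψ, ψ⟫_ℂ = ⟪ψ, A ψ⟫_ℂ := by
    have e := hsym ψ ψ
    simpa using e
  have hlc : ⟪ψ, A ψ⟫_ℂ = (l : ℂ) := by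
    have h8 := ((ContinuousLinearMap.isPositive_iff_complex A).mp hApos ψ).1
    rw [← h9, ← h8]
  have hA_eq : A = (l : ℂ) • projVec ψ := by
    ext x
    have hperp : ⟪ψ, x - ⟪ψ, x⟫_ℂ • ψ⟫_ℂ = 0 := by
      rw [inner_sub_right, inner_smul_right, inner_self_eq_norm_sq_to_K, hψ]
      norm_num
    have hdx : A x = ⟪ψ, x⟫_ℂ • A ψ := by
      have e := hAperp _ hperp
      rw [map_sub, map_smul, sub_eq_zero] at e
      exact e
    rw [hdx, hrange ψ, hlc]
    simp only [ContinuousLinearMap.smul_apply, projVec_apply, smul_smul]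
    rw [mul_comm]
  have hl_mem : l ∈ Set.Icc (0 : ℝ) 1 := by
    constructor
    · exact hApos.2 ψ
    · have hle := (ContinuousLinearMap.le_def A 1).mp hA.2
      have := hle.2 ψ
      rw [ContinuousLinearMap.reApplyInnerSelf] at this
      simp only [ContinuousLinearMap.sub_apply, ContinuousLinearMap.one_apply,
        inner_sub_left, map_sub] at this
      rw [inner_self_eq_norm_sq, hψ] at this
      rw [hl]
      nlinarith
  refine ⟨hBA, ⟨l, hl_mem, hA_eq⟩, ?_⟩
  -- Step 5 : the sequential product is the standard one
  intro ρ hρ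
  have hsqrt : sqrtOp A = ((Real.sqrt l : ℝ) : ℂ) • projVec ψ := by
    unfold sqrtOp
    apply CFC.sqrt_unique
    · rw [smul_mul_assoc, mul_smul_comm, smul_smul, projVec_mul_self hψ, ← Complex.ofReal_mul,
        Real.mul_self_sqrt hl_mem.1, ← hA_eq]
    · exact smul_nonneg_op (Real.sqrt_nonneg l) (projVec_nonneg ψ)
  rw [h ρ hρ, hsqrt, hA_eq, mul_smul_comm, traceOp_smul, traceOp_mul_projVec,
    smul_mul_assoc, smul_mul_assoc, mul_smul_comm, projVec_mul_mul, smul_smul, smul_smul,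
    ← Complex.ofReal_mul, Real.mul_self_sqrt hl_mem.1]


end
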